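/- Let m be a finite-dimensional Lie algebra over F_q with an ideal u consisting of nilpotent elements such that m/u is reductive. If π: m → m/u is the natural projection, then the nilpotent cone of m equals the preimage under π of the nilpotent cone of m/u; consequently |N(m)| = q^{dim u} · |N(m/u)|, where N denotes the set of nilpotent elements rational over F_q. -/

import Mathlib

/-!
STATEMENT 1: Let `m` be a finite-dimensional Lie algebra over `F_q` with an ideal `u`
consisting of nilpotent elements such that `m/u` is reductive.  If `π : m → m/u` is the
natural projection, then the nilpotent cone of `m` equals `π⁻¹` of the nilpotent cone of
`m/u`; consequently `|N(m)| = q^(dim u) * |N(m/u)|`.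

An element `x` is nilpotent if its image under every finite-dimensional representation is
a nilpotent endomorphism.  "Reductive" is rendered as: the radical of `m/u` coincides with
its center.
-/

attribute [local instance 100] LieRing.ofAssociativeRing

/-- `x ∈ m` is a nilpotent element: every finite-dimensional Lie algebra representation
sends it to a nilpotent endomorphism. -/
def IsNilpotentElement (F m : Type) [Field F] [LieRing m] [LieAlgebra F m] (x : m) : Prop :=
  ∀ (V : Type) [AddCommGroup V] [Module F V] [FiniteDimensional F V]
    (r : m →ₗ⁅F⁆ Module.End F V), IsNilpotent (r x)

/-- An endomorphism preserving a submodule, nilpotent on it and on the quotient,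
is nilpotent. -/
lemma aux_nilp_of_restrict_mapQ {F V : Type} [Field F] [AddCommGroup V] [Module F V]
    (f : Module.End F V) (W : Submodule F V) (hW : W ≤ W.comap f)
    (h1 : IsNilpotent (f.restrict (fun v hv => Submodule.mem_comap.mp (hW hv))))
    (h2 : IsNilpotent (W.mapQ W f hW)) : IsNilpotent f := by
  obtain ⟨a, ha⟩ := h2
  obtain ⟨b, hb⟩ := h1
  refine ⟨b + a, ?_⟩
  ext v
  have hmem : (f ^ a) v ∈ W := by
    have : W.mapQ W (f ^ a) (W.le_comap_pow_of_le_comap hW a) = 0 := by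
      rw [Submodule.mapQ_pow W hW a, ha]
    have h3 := congrArg (fun g => g (Submodule.Quotient.mk v)) this
    simp only [Submodule.mapQ_apply, LinearMap.zero_apply] at h3
    rwa [Submodule.Quotient.mk_eq_zero] at h3
  have hres : ((f.restrict (fun v hv => Submodule.mem_comap.mp (hW hv))) ^ b) ⟨(f ^ a) v, hmem⟩ = 0 := by
    rw [hb]; rfl
  rw [Module.End.pow_restrict] at hres
  have : (f ^ b) ((f ^ a) v) = 0 := by
    have := congrArg (Subtype.val) hres
    simpa [LinearMap.restrict_apply] using this
  calc (f ^ (b + a)) v = (f ^ b) ((f ^ a) v) := by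
        rw [pow_add]; rfl
    _ = 0 := this
  
/-- The quotient map as a morphism of Lie algebras. -/
def auxMkHom {F m : Type} [Field F] [LieRing m] [LieAlgebra F m] (u : LieIdeal F m) :
    m →ₗ⁅F⁆ m ⧸ u :=
  { (LieSubmodule.Quotient.mk' u).toLinearMap with
    map_lie' := fun {_ _} => rfl }

lemma auxMkHom_apply {F m : Type} [Field F] [LieRing m] [LieAlgebra F m] (u : LieIdeal F m)
    (x : m) : auxMkHom u x = LieSubmodule.Quotient.mk' u x := rfl

/-- Key lemma: if the image of `x` in `m/u` is a nilpotent element and `u` consists of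
nilpotent elements, then `x` acts nilpotently in every finite-dimensional representation. -/
lemma aux_key (F : Type) [Field F] (m : Type) [LieRing m] [LieAlgebra F m]
    [Module.Finite F m] (u : LieIdeal F m) (hu : ∀ x ∈ u, IsNilpotentElement F m x) :
    ∀ (n : ℕ) (V : Type) [AddCommGroup V] [Module F V] [FiniteDimensional F V],
      Module.finrank F V = n →
      ∀ (r : m →ₗ⁅F⁆ Module.End F V) (x : m),
        IsNilpotentElement F (m ⧸ u) (LieSubmodule.Quotient.mk' u x) → IsNilpotent (r x) := by
  intro n
  induction n using Nat.strong_induction_on with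
  | _ n IH =>
    intro V _ _ _ hn r x hq
    rcases subsingleton_or_nontrivial V with hV | hV
    · exact ⟨1, by rw [pow_one]; ext v; exact Subsingleton.elim _ _⟩
    -- the subspace annihilated by `u`
    set W : Submodule F V := ⨅ y : u, LinearMap.ker (r y.1) with hWdef
    have memW : ∀ v : V, v ∈ W ↔ ∀ y : u, r y.1 v = 0 := by
      intro v
      simp [hWdef, Submodule.mem_iInf, LinearMap.mem_ker]
    -- `W` is invariant under the action of all of `m`
    have hWinv : ∀ z : m, W ≤ W.comap (r z) := by
      intro z v hv
      rw [Submodule.mem_comap, memW]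
      intro y
      have hbr : r ⁅y.1, z⁆ = r y.1 * r z - r z * r y.1 := by
        rw [LieHom.map_lie, Ring.lie_def]
      have h1 : r y.1 v = 0 := (memW v).1 hv y
      have h2 : r ⁅y.1, z⁆ v = 0 := by
        have hzy : ⁅z, y.1⁆ ∈ u := u.lie_mem y.2
        have hyz : ⁅y.1, z⁆ ∈ u := by
          rw [← lie_skew]; exact neg_mem hzy
        exact (memW v).1 hv ⟨⁅y.1, z⁆, hyz⟩
      have := congrArg (fun g => g v) hbr
      simp only [LinearMap.sub_apply, Module.End.mul_apply] at this
      have : r ⁅y.1, z⁆ v = r y.1 (r z v) - r z (r y.1 v) := this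
      rw [h1, map_zero, sub_zero] at this
      rw [← this, h2]
    -- `W` is nonzero, by Engel's theorem applied to `u` acting on `V`
    have hWne : W ≠ ⊥ := by
      let ru : u →ₗ⁅F⁆ Module.End F V := r.comp u.incl
      letI : LieRingModule u V := LieRingModule.compLieHom V ru
      letI : LieModule F u V := LieModule.compLieHom V ru
      have htoEnd : ∀ y : u, LieModule.toEnd F u V y = r y.1 := by
        intro y; ext v; rfl
      haveI : LieModule.IsNilpotent u V := by
        apply LieAlgebra.isEngelian_of_isNoetherian (R := F) (L := u) V
        intro y
        rw [htoEnd y]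
        exact hu y.1 y.2 V r
      haveI := LieModule.nontrivial_max_triv_of_isNilpotent (R := F) (L := u) (M := V)
      obtain ⟨⟨v, hv⟩, ⟨w, hw⟩, hvw⟩ := this
      have : v ≠ w := fun h => hvw (Subtype.ext h)
      intro hbot
      apply this
      have hvW : v ∈ W := (memW v).2 fun y => hv y
      have hwW : w ∈ W := (memW w).2 fun y => hw y
      rw [hbot, Submodule.mem_bot] at hvW hwW
      rw [hvW, hwW]
    by_cases hWtop : W = ⊤
    · -- `u` acts trivially on `V`: the representation factors through `m ⧸ u`
      have hker : (u : Submodule F m) ≤ LinearMap.ker r.toLinearMap := by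
        intro y hy
        rw [LinearMap.mem_ker]
        ext v
        have : v ∈ W := hWtop ▸ Submodule.mem_top
        exact (memW v).1 this ⟨y, hy⟩
      let r' : (m ⧸ u) →ₗ⁅F⁆ Module.End F V :=
        { Submodule.liftQ (u : Submodule F m) r.toLinearMap hker with
          map_lie' := by
            intro a b
            obtain ⟨a, rfl⟩ := LieSubmodule.Quotient.surjective_mk' u a
            obtain ⟨b, rfl⟩ := LieSubmodule.Quotient.surjective_mk' u b
            change Submodule.liftQ _ _ hker (LieSubmodule.Quotient.mk' u ⁅a, b⁆) = _
            exact r.map_lie' }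
      have : r x = r' (LieSubmodule.Quotient.mk' u x) := rfl
      rw [this]
      exact hq V r'
    · -- split into the subrepresentation `W` and the quotient `V ⧸ W`
      -- the restricted representation
      let rW : m →ₗ⁅F⁆ Module.End F W :=
        { toFun := fun z => (r z).restrict (fun v hv => hWinv z hv)
          map_add' := by
            intro a b; ext v
            simp [LinearMap.restrict_apply]
          map_smul' := by
            intro c a; ext v
            simp [LinearMap.restrict_apply]
          map_lie' := by
            intro a b; ext v
            simp [LinearMap.restrict_apply, Ring.lie_def, LieHom.map_lie] }
      let rQ : m →ₗ⁅F⁆ Module.End F (V ⧸ W) :=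
        { toFun := fun z => W.mapQ W (r z) (hWinv z)
          map_add' := by
            intro a b
            ext v
            simp [Submodule.mapQ_apply]
          map_smul' := by
            intro c a
            ext v
            simp [Submodule.mapQ_apply]
          map_lie' := by
            intro a b
            ext v
            simp [Submodule.mapQ_apply, Ring.lie_def, LieHom.map_lie] }
      have hWpos : 0 < Module.finrank F W :=
        Nat.pos_of_ne_zero (fun h => hWne (Submodule.finrank_eq_zero.1 h))
      have hWlt : Module.finrank F W < n := by
        rw [← hn]
        exact Submodule.finrank_lt hWtop
      have hQlt : Module.finrank F (V ⧸ W) < n := by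
        have hsum := Submodule.finrank_quotient_add_finrank W
        omega
      have h1 : IsNilpotent (rW x) :=
        IH _ hWlt W rfl rW x hq
      have h2 : IsNilpotent (rQ x) :=
        IH _ hQlt (V ⧸ W) rfl rQ x hq
      exact aux_nilp_of_restrict_mapQ (r x) W (hWinv x) h1 h2

theorem stmt_1 (F : Type) [Field F] [Fintype F]
    (m : Type) [LieRing m] [LieAlgebra F m] [Module.Finite F m]
    (u : LieIdeal F m)
    -- the ideal `u` consists of nilpotent elements
    (hu : ∀ x ∈ u, IsNilpotentElement F m x)
    -- the quotient `m/u` is reductive: its radical equals its center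
    (hred : LieAlgebra.radical F (m ⧸ u) = LieAlgebra.center F (m ⧸ u)) :
    {x : m | IsNilpotentElement F m x} =
      (LieSubmodule.Quotient.mk' u) ⁻¹' {y : m ⧸ u | IsNilpotentElement F (m ⧸ u) y} ∧
    Nat.card {x : m | IsNilpotentElement F m x} =
      Fintype.card F ^ Module.finrank F u *
        Nat.card {y : m ⧸ u | IsNilpotentElement F (m ⧸ u) y} := by
  have hset : {x : m | IsNilpotentElement F m x} =
      (LieSubmodule.Quotient.mk' u) ⁻¹' {y : m ⧸ u | IsNilpotentElement F (m ⧸ u) y} := by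
    ext x
    constructor
    · intro hx
      intro V _ _ _ r'
      have := hx V (r'.comp (auxMkHom u))
      exact this
    · intro hx
      intro V _ _ _ r
      exact aux_key F m u hu (Module.finrank F V) V rfl r x hx
  refine ⟨hset, ?_⟩
  rw [hset]
  -- choose a linear section of the projection
  obtain ⟨g, hg⟩ := (u : Submodule F m).mkQ.exists_rightInverse_of_surjective
    (LinearMap.range_eq_top.2 (Submodule.Quotient.mk_surjective _))
  have hgap : ∀ y : m ⧸ u, (u : Submodule F m).mkQ (g y) = y := fun y =>
    LinearMap.congr_fun hg y
  have hmk : ∀ z : m, LieSubmodule.Quotient.mk' u z = (u : Submodule F m).mkQ z := fun _ => rfl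
  set T : Set (m ⧸ u) := {y : m ⧸ u | IsNilpotentElement F (m ⧸ u) y} with hT
  -- the preimage is equivalent to `u × T`
  let e : ((LieSubmodule.Quotient.mk' u) ⁻¹' T) ≃ u × T :=
    { toFun := fun x => (⟨x.1 - g (LieSubmodule.Quotient.mk' u x.1), by
        have : (u : Submodule F m).mkQ (x.1 - g (LieSubmodule.Quotient.mk' u x.1)) = 0 := by
          rw [map_sub, hgap, hmk, sub_self]
        exact (Submodule.Quotient.mk_eq_zero _).1 this⟩,
        ⟨LieSubmodule.Quotient.mk' u x.1, x.2⟩)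
      invFun := fun p => ⟨g p.2.1 + p.1.1, by
        have h : LieSubmodule.Quotient.mk' u (g p.2.1 + p.1.1) = p.2.1 := by
          rw [hmk, map_add, hgap]
          have h0 : (u : Submodule F m).mkQ p.1.1 = 0 :=
            (Submodule.Quotient.mk_eq_zero _).2 p.1.2
          rw [h0]; exact add_zero _
        rw [Set.mem_preimage, h]
        exact p.2.2⟩
      left_inv := fun x => by
        ext
        show g (LieSubmodule.Quotient.mk' u x.1) +
          (x.1 - g (LieSubmodule.Quotient.mk' u x.1)) = x.1
        abel
      right_inv := fun p => by
        have hmkp : LieSubmodule.Quotient.mk' u (g p.2.1 + p.1.1) = p.2.1 := by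
          rw [hmk, map_add, hgap]
          have h0 : (u : Submodule F m).mkQ p.1.1 = 0 :=
            (Submodule.Quotient.mk_eq_zero _).2 p.1.2
          rw [h0]; exact add_zero _
        refine Prod.ext (Subtype.ext ?_) (Subtype.ext ?_)
        · show (g p.2.1 + p.1.1) - g (LieSubmodule.Quotient.mk' u (g p.2.1 + p.1.1)) = p.1.1
          rw [hmkp]
          abel
        · exact hmkp }
  rw [Nat.card_congr e, Nat.card_prod]
  congr 1
  -- `|u| = q ^ dim u`
  haveI : Finite m := Module.finite_of_finite F
  haveI : Finite u := Subtype.finite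
  haveI : Fintype u := Fintype.ofFinite _
  rw [Nat.card_eq_fintype_card]
  exact Module.card_eq_pow_finrank (K := F) (V := u)
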